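/- Let κ ∈ ℝ with κ ≠ 0, let ρ(y) = (3/2) sech²(y/2), and define the linear operator L acting on pairs of smooth functions (u,w) on ℝ by L(u,w) = ( u'' − (1−κ)u + 2ρu − κw , κ(u − w) ). Then L(ρ', ρ') = (0, 0) (the goldstone mode), and L(0, −ρ'/κ) = (ρ', ρ') (the propagator mode), so the zero eigenvalue of L has a generalized eigenfunction and algebraic multiplicity at least two. -/

import Mathlib

open Real

/-- The spike profile `ρ(y) = (3/2) sech²(y/2)`. -/
noncomputable def rho (y : ℝ) : ℝ := (3/2) * (1 / Real.cosh (y/2))^2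

/-- The linearized operator `L(u,w) = (u'' − (1−κ)u + 2ρu − κw, κ(u − w))`. -/
noncomputable def Lop (κ : ℝ) (u w : ℝ → ℝ) : (ℝ → ℝ) × (ℝ → ℝ) :=
  (fun y => deriv (deriv u) y - (1 - κ) * u y + 2 * rho y * u y - κ * w y,
   fun y => κ * (u y - w y))

noncomputable def r1 (y : ℝ) : ℝ := -(3/2) * Real.sinh (y/2) / Real.cosh (y/2)^3
noncomputable def r2 (y : ℝ) : ℝ :=
  -(3/4) * (1 / Real.cosh (y/2)^2 - 3 * Real.sinh (y/2)^2 / Real.cosh (y/2)^4)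
noncomputable def r3 (y : ℝ) : ℝ :=
  3 * Real.sinh (y/2) / Real.cosh (y/2)^3 - (9/2) * Real.sinh (y/2)^3 / Real.cosh (y/2)^5

lemma cosh_ne (y : ℝ) : Real.cosh (y/2) ≠ 0 := (Real.cosh_pos (y/2)).ne'

lemma hc (y : ℝ) : HasDerivAt (fun y : ℝ => Real.cosh (y/2)) (Real.sinh (y/2) * (1/2)) y :=
  by have h := (Real.hasDerivAt_cosh (y/2)).comp y ((hasDerivAt_id y).div_const 2); exact h

lemma hs (y : ℝ) : HasDerivAt (fun y : ℝ => Real.sinh (y/2)) (Real.cosh (y/2) * (1/2)) y :=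
  by have h := (Real.hasDerivAt_sinh (y/2)).comp y ((hasDerivAt_id y).div_const 2); exact h

lemma hrho (y : ℝ) : HasDerivAt rho (r1 y) y := by
  have h := (((hasDerivAt_const y (1:ℝ)).div (hc y) (cosh_ne y)).pow 2).const_mul (3/2 : ℝ)
  refine h.congr_deriv ?_
  have := cosh_ne y
  unfold r1
  simp only [Pi.div_apply, Pi.pow_apply]
  field_simp
  rw [show (2:ℕ) - 1 = 1 from rfl, pow_one, one_div, mul_assoc ((2:ℕ):ℝ), mul_inv_cancel₀ this]
  ring

lemma hr1 (y : ℝ) : HasDerivAt r1 (r2 y) y := by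
  have h := (((hs y).const_mul (-(3/2) : ℝ)).div ((hc y).pow 3) (pow_ne_zero 3 (cosh_ne y)))
  refine h.congr_deriv ?_
  have := cosh_ne y
  unfold r2
  simp only [Pi.div_apply, Pi.pow_apply]
  field_simp
  ring

lemma hr2 (y : ℝ) : HasDerivAt r2 (r3 y) y := by
  have hA := (hasDerivAt_const y (1:ℝ)).div ((hc y).pow 2) (pow_ne_zero 2 (cosh_ne y))
  have hB := (((hs y).pow 2).const_mul (3:ℝ)).div ((hc y).pow 4) (pow_ne_zero 4 (cosh_ne y))
  have h := (hA.sub hB).const_mul (-(3/4) : ℝ)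
  refine h.congr_deriv ?_
  have := cosh_ne y
  unfold r3
  simp only [Pi.div_apply, Pi.pow_apply]
  field_simp
  ring

lemma deriv_rho_eq : deriv rho = r1 := funext fun y => (hrho y).deriv

lemma deriv_r1_eq : deriv r1 = r2 := funext fun y => (hr1 y).deriv

lemma deriv_r2_eq : deriv r2 = r3 := funext fun y => (hr2 y).deriv

/-- `L(ρ',ρ') = 0` (goldstone mode) and `L(0, −ρ'/κ) = (ρ',ρ')` (propagator mode):
the zero eigenvalue of `L` has a generalized eigenfunction, hence algebraic
multiplicity at least two. -/
theorem stmt_12 (κ : ℝ) (hκ : κ ≠ 0) :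
    (∀ y : ℝ, (Lop κ (deriv rho) (deriv rho)).1 y = 0) ∧
    (∀ y : ℝ, (Lop κ (deriv rho) (deriv rho)).2 y = 0) ∧
    (∀ y : ℝ, (Lop κ (fun _ => 0) (fun t => -(deriv rho t) / κ)).1 y = deriv rho y) ∧
    (∀ y : ℝ, (Lop κ (fun _ => 0) (fun t => -(deriv rho t) / κ)).2 y = deriv rho y) := by
  refine ⟨?_, ?_, ?_, ?_⟩
  · intro y
    simp only [Lop, deriv_rho_eq, deriv_r1_eq, deriv_r2_eq]
    unfold r1 r3 rho
    have hsq := Real.cosh_sq (y/2)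
    have hz : Real.cosh (y/2) * (Real.cosh (y/2))⁻¹ = 1 := mul_inv_cancel₀ (cosh_ne y)
    set c := Real.cosh (y/2)
    set s := Real.sinh (y/2)
    linear_combination (9/2*s*c⁻¹^5) * hsq + (-(9/2)*s*c⁻¹^3*(1 + c*c⁻¹)) * hz
  · intro y
    simp [Lop]
  · intro y
    simp only [Lop]
    rw [show deriv (deriv (fun _ : ℝ => (0:ℝ))) = fun _ => 0 by simp]
    field_simp
    ring
  · intro y
    simp only [Lop]
    field_simp
    ring
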